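/- Let S be the restriction of A₀ to the kernel of τ, where τ : H_{A₀} → h is bounded surjective with dense kernel, and 0 ∈ ρ(A₀). Then the domain of S* equals {φ ∈ H : φ = φ₀ + G₀ζ, φ₀ ∈ D(A₀), ζ ∈ h} and S*φ = A₀φ₀. -/

import Mathlib

/- Abstract Krein framework (Posilicano): the self-adjoint operator A₀ on the
Hilbert space H is modeled by its domain `D`, its action `A`, its resolvent set
`ρA` and its resolvent family `R z = (-A₀+z)⁻¹`; `τ : 𝒟(A₀) → h` is bounded
w.r.t. the graph norm; `G z = (τ R_z̄)*` is characterized by the adjoint identity. -/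

local notation "⟪" x ", " y "⟫" => @inner ℂ _ _ x y

/-- with `S := A₀ restricted to Ker τ` (τ bounded, surjective, with
dense kernel) and `G₀ := (τ A₀⁻¹)*`, the domain of `S*` is
`{φ = φ₀ + G₀ ζ : φ₀ ∈ 𝒟(A₀), ζ ∈ h}` and `S* φ = A₀ φ₀`.  Membership of a pair
`(φ, η)` in the graph of `S*` is expressed by the defining adjoint relation
`∀ x ∈ Ker τ, ⟪η, x⟫ = ⟪φ, A₀ x⟫`. -/
theorem krein_adjoint_domain
    {H h : Type*}
    [NormedAddCommGroup H] [InnerProductSpace ℂ H] [CompleteSpace H]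
    [NormedAddCommGroup h] [InnerProductSpace ℂ h] [CompleteSpace h]
    (D : Submodule ℂ H) (hDdense : Dense (D : Set H))
    (A : D →ₗ[ℂ] H)
    (hsym : ∀ x y : D, ⟪A x, (y : H)⟫ = ⟪(x : H), A y⟫)
    (ρA : Set ℂ)
    (hρconj : ∀ z ∈ ρA, (starRingEnd ℂ) z ∈ ρA)
    (R : ℂ → H →L[ℂ] H)
    (hmem : ∀ z, z ∈ ρA → ∀ y : H, R z y ∈ D)
    (hres1 : ∀ z (hz : z ∈ ρA) (y : H), z • R z y - A ⟨R z y, hmem z hz y⟩ = y)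
    (hres2 : ∀ z ∈ ρA, ∀ x : D, R z (z • (x : H) - A x) = (x : H))
    (hRadj : ∀ z ∈ ρA, ContinuousLinearMap.adjoint (R z) = R ((starRingEnd ℂ) z))
    (τ : D →ₗ[ℂ] h) (C : ℝ)
    (hτ : ∀ x : D, ‖τ x‖ ≤ C * (‖(x : H)‖ + ‖A x‖))
    (G : ℂ → h →L[ℂ] H)
    (hG : ∀ z (hz : z ∈ ρA) (ζ : h) (y : H),
      ⟪G z ζ, y⟫ = ⟪ζ, τ ⟨R ((starRingEnd ℂ) z) y, hmem _ (hρconj z hz) y⟩⟫)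
    (Ainv : H →L[ℂ] H)
    (hAinvmem : ∀ y : H, Ainv y ∈ D)
    (hAinv1 : ∀ y : H, A ⟨Ainv y, hAinvmem y⟩ = y)
    (hAinv2 : ∀ x : D, Ainv (A x) = (x : H))
    (hτsurj : Function.Surjective τ)
    (hker : Dense ((fun x : D => (x : H)) '' {x : D | τ x = 0}))
    (h0 : (0 : ℂ) ∈ ρA)
    (G0 : h →L[ℂ] H)
    (hG0 : ∀ (ζ : h) (y : H), ⟪G0 ζ, y⟫ = ⟪ζ, τ ⟨Ainv y, hAinvmem y⟩⟫) :
    ∀ φ : H,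
      ((∃ η : H, ∀ x : D, τ x = 0 → ⟪η, (x : H)⟫ = ⟪φ, A x⟫) ↔
        ∃ (φ₀ : D) (ζ : h), φ = (φ₀ : H) + G0 ζ) ∧
      ∀ (η : H) (φ₀ : D) (ζ : h),
        (∀ x : D, τ x = 0 → ⟪η, (x : H)⟫ = ⟪φ, A x⟫) →
        φ = (φ₀ : H) + G0 ζ → η = A φ₀ := by
  intro φ
  -- Ainv as a linear map into D
  -- symmetry of Ainv against A: ⟪Ainv a, A x⟫ = ⟪a, x⟫
  have hAinvsym : ∀ (a : H) (x : D), ⟪Ainv a, A x⟫ = ⟪a, (x : H)⟫ := by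
    intro a x
    have := hsym ⟨Ainv a, hAinvmem a⟩ x
    rw [hAinv1 a] at this
    exact this.symm
  -- adjoint relation in the convenient form
  have hstar : ∀ (ζ : h) (x : D), ⟪G0 ζ, A x⟫ = ⟪ζ, τ x⟫ := by
    intro ζ x
    have h1 := hG0 ζ (A x)
    have h2 : (⟨Ainv (A x), hAinvmem (A x)⟩ : D) = x := Subtype.ext (hAinv2 x)
    rwa [h2] at h1
  -- the continuous linear map T = τ ∘ Ainv : H → h
  let L : H →ₗ[ℂ] h := τ.comp (Ainv.toLinearMap.codRestrict D hAinvmem)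
  have hLdef : ∀ y : H, L y = τ ⟨Ainv y, hAinvmem y⟩ := fun y => rfl
  have hLbound : ∀ y : H, ‖L y‖ ≤ (|C| * (‖Ainv‖ + 1)) * ‖y‖ := by
    intro y
    have h1 : ‖τ ⟨Ainv y, hAinvmem y⟩‖ ≤ C * (‖Ainv y‖ + ‖y‖) := by
      have := hτ ⟨Ainv y, hAinvmem y⟩
      rwa [hAinv1 y] at this
    have h2 : ‖Ainv y‖ ≤ ‖Ainv‖ * ‖y‖ := Ainv.le_opNorm y
    have h3 : C * (‖Ainv y‖ + ‖y‖) ≤ |C| * (‖Ainv y‖ + ‖y‖) := by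
      apply mul_le_mul_of_nonneg_right (le_abs_self C)
      positivity
    have h4 : |C| * (‖Ainv y‖ + ‖y‖) ≤ |C| * (‖Ainv‖ * ‖y‖ + ‖y‖) := by
      apply mul_le_mul_of_nonneg_left _ (abs_nonneg C)
      linarith
    rw [hLdef]
    calc ‖τ ⟨Ainv y, hAinvmem y⟩‖ ≤ |C| * (‖Ainv‖ * ‖y‖ + ‖y‖) := by linarith
      _ = (|C| * (‖Ainv‖ + 1)) * ‖y‖ := by ring
  let T : H →L[ℂ] h := L.mkContinuous _ hLbound
  have hTdef : ∀ y : H, T y = τ ⟨Ainv y, hAinvmem y⟩ := fun y => rfl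
  have hTsurj : Function.Surjective T := by
    intro ζ
    obtain ⟨x, hx⟩ := hτsurj ζ
    refine ⟨A x, ?_⟩
    rw [hTdef, show (⟨Ainv (A x), hAinvmem (A x)⟩ : D) = x from Subtype.ext (hAinv2 x), hx]
  have hGT : ∀ (ζ : h) (y : H), ⟪G0 ζ, y⟫ = ⟪ζ, T y⟫ := by
    intro ζ y; rw [hTdef]; exact hG0 ζ y
  obtain ⟨Cp, hCp, hpre⟩ := T.exists_preimage_norm_le hTsurj
  -- G0 is bounded below, hence has closed range
  have hlow : ∀ ζ : h, ‖ζ‖ ≤ Cp.toNNReal * ‖G0 ζ‖ := by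
    intro ζ
    obtain ⟨y, hy, hny⟩ := hpre ζ
    have h2 : ⟪ζ, ζ⟫ = ⟪G0 ζ, y⟫ := by rw [hGT ζ y, hy]
    have h3 : ‖ζ‖ ^ 2 ≤ ‖G0 ζ‖ * ‖y‖ := by
      have e1 : ‖ζ‖ ^ 2 = RCLike.re ⟪ζ, ζ⟫ := (inner_self_eq_norm_sq (𝕜 := ℂ) ζ).symm
      rw [e1, h2]
      exact (RCLike.re_le_norm _).trans (norm_inner_le_norm _ _)
    have h4 : ‖ζ‖ ^ 2 ≤ ‖G0 ζ‖ * (Cp * ‖ζ‖) := by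
      refine h3.trans (mul_le_mul_of_nonneg_left hny (norm_nonneg _))
    rcases eq_or_lt_of_le (norm_nonneg ζ) with hz | hz
    · rw [← hz]; positivity
    · have := (mul_le_mul_iff_of_pos_right hz).mp (by nlinarith : ‖ζ‖ * ‖ζ‖ ≤ (Cp * ‖G0 ζ‖) * ‖ζ‖)
      rwa [Real.coe_toNNReal _ hCp.le]
  have hanti : AntilipschitzWith Cp.toNNReal G0 := G0.antilipschitz_of_bound hlow
  have hclosed : IsClosed (Set.range G0) := hanti.isClosed_range G0.uniformContinuous
  -- the range of G0 as a closed submodule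
  let M : Submodule ℂ H := LinearMap.range (G0 : h →ₗ[ℂ] H)
  have hMrange : (M : Set H) = Set.range G0 := by
    ext v; simp [M, LinearMap.mem_range]
  have hMclosed : IsClosed (M : Set H) := by rw [hMrange]; exact hclosed
  haveI : CompleteSpace M := hMclosed.completeSpace_coe
  constructor
  · constructor
    · rintro ⟨η, hη⟩
      -- ψ := φ - Ainv η lies in (A ker τ)ᗮ = range G0
      set ψ := φ - Ainv η with hψ
      have hψorth : ∀ x : D, τ x = 0 → ⟪ψ, A x⟫ = 0 := by
        intro x hx
        have h1 : ⟪Ainv η, A x⟫ = ⟪η, (x : H)⟫ := hAinvsym η x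
        rw [hψ, inner_sub_left, h1, ← hη x hx, sub_self]
      obtain ⟨m, hm, w, hw, hmw⟩ := M.exists_add_mem_mem_orthogonal ψ
      -- w ∈ Mᗮ implies T w = 0, i.e. w = A x with τ x = 0
      have hTw : τ ⟨Ainv w, hAinvmem w⟩ = 0 := by
        by_contra hne
        have h1 : ∀ ζ : h, ⟪ζ, τ ⟨Ainv w, hAinvmem w⟩⟫ = 0 := by
          intro ζ
          have := (Submodule.mem_orthogonal M w).mp hw (G0 ζ) ⟨ζ, rfl⟩
          rw [← hG0 ζ w]; exact this
        have := h1 (τ ⟨Ainv w, hAinvmem w⟩)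
        rw [inner_self_eq_zero] at this
        exact hne this
      have hw0 : w = 0 := by
        have hψw : ⟪ψ, w⟫ = 0 := by
          have := hψorth ⟨Ainv w, hAinvmem w⟩ hTw
          rwa [hAinv1 w] at this
        have hmworth : ⟪m, w⟫ = 0 := (Submodule.mem_orthogonal M w).mp hw m hm
        have : ⟪w, w⟫ = 0 := by
          have : ⟪m + w, w⟫ = 0 := by rw [← hmw]; exact hψw
          rwa [inner_add_left, hmworth, zero_add] at this
        exact inner_self_eq_zero.mp this
      have hψM : ψ ∈ M := by rw [hmw, hw0, add_zero]; exact hm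
      obtain ⟨ζ, hζ⟩ := hψM
      refine ⟨⟨Ainv η, hAinvmem η⟩, ζ, ?_⟩
      have hζ' : G0 ζ = φ - Ainv η := hζ
      rw [hζ']
      abel
    · rintro ⟨φ₀, ζ, rfl⟩
      refine ⟨A φ₀, fun x hx => ?_⟩
      rw [inner_add_left, hstar ζ x, hx, inner_zero_right, add_zero, hsym φ₀ x]
  · rintro η φ₀ ζ hη rfl
    have key : ∀ x : D, τ x = 0 → ⟪η - A φ₀, (x : H)⟫ = 0 := by
      intro x hx
      rw [inner_sub_left, hη x hx, inner_add_left, hstar ζ x, hx, inner_zero_right,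
        add_zero, hsym φ₀ x, sub_self]
    have hcont : Continuous fun y : H => ⟪η - A φ₀, y⟫ :=
      continuous_const.inner continuous_id
    have heq : (fun y : H => ⟪η - A φ₀, y⟫) = fun _ => (0 : ℂ) := by
      apply Continuous.ext_on hker hcont continuous_const
      rintro y ⟨x, hx, rfl⟩
      exact key x hx
    have h0' : ⟪η - A φ₀, η - A φ₀⟫ = 0 := congrFun heq _
    exact sub_eq_zero.mp (inner_self_eq_zero.mp h0')
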